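/- Let X be a complete separable metric space. For i = 0,1 let ν_i^n, ν_i be Borel probability measures on X with ν_i^n → ν_i weakly, let π^n be a coupling of ν_0^n and ν_1^n converging weakly to a coupling π of ν_0 and ν_1, let φ : X × X → ℝ be bounded continuous, and let f_i ∈ L¹(X, ν_i) be Borel functions. Suppose there exists C > 0 such that ν_i^n ≤ C·ν_i (as measures) for all n and i = 0,1. Then for i = 0,1: limsup_{n→∞} ∫_{X×X} φ(x₀,x₁)·f_i(x_i) dπ^n(x₀,x₁) ≤ ∫_{X×X} φ(x₀,x₁)·f_i(x_i) dπ(x₀,x₁). -/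

import Mathlib

/-- A bundled mm-space: a complete separable metric space with a Borel probability measure. -/
structure MMSpace where
  X : Type
  [metric : MetricSpace X]
  [cpl : CompleteSpace X]
  [sep : TopologicalSpace.SeparableSpace X]
  [mble : MeasurableSpace X]
  [borel : BorelSpace X]
  μ : MeasureTheory.Measure X
  [prob : MeasureTheory.IsProbabilityMeasure μ]

attribute [instance] MMSpace.metric MMSpace.cpl MMSpace.sep MMSpace.mble MMSpace.borel MMSpace.prob

open MeasureTheory ENNReal Filter Topology Set

noncomputable section

/-- A coupling of two measures on `X` is a measure on `X × X` whose marginals are the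
given measures. -/
def IsCoupling {X : Type*} [MeasurableSpace X] (π : Measure (X × X)) (μ ν : Measure X) : Prop :=
  π.map Prod.fst = μ ∧ π.map Prod.snd = ν

/-- A measure has finite second moment if `∫ d(x,x₀)² dμ < ∞` for some base point. -/
def HasFiniteSecondMoment {X : Type*} [PseudoMetricSpace X] [MeasurableSpace X]
    (μ : Measure X) : Prop :=
  ∃ x₀ : X, ∫⁻ x, ENNReal.ofReal (dist x x₀) ^ 2 ∂μ < ∞

/-- The square-root of the quadratic transport cost of a coupling. -/
def cost2 {X : Type*} [PseudoMetricSpace X] [MeasurableSpace X] (π : Measure (X × X)) : ℝ≥0∞ :=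
  (∫⁻ p, ENNReal.ofReal (dist p.1 p.2) ^ 2 ∂π) ^ (1 / 2 : ℝ)

/-- The 2-Wasserstein distance (valued in `[0,∞]`). -/
def W2 {X : Type*} [PseudoMetricSpace X] [MeasurableSpace X] (μ ν : Measure X) : ℝ≥0∞ :=
  ⨅ (π : Measure (X × X)) (_ : IsCoupling π μ ν), cost2 π

/-- A coupling is optimal if it attains the 2-Wasserstein distance. -/
def IsOptimalCoupling {X : Type*} [PseudoMetricSpace X] [MeasurableSpace X]
    (π : Measure (X × X)) (μ ν : Measure X) : Prop :=
  IsCoupling π μ ν ∧ cost2 π = W2 μ ν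

open Classical in
/-- The Rényi entropy `S_{N',μ}(ν) = ∫ ρ^{1-1/N'} dμ` if `ν = ρμ ≪ μ`, and `∞` otherwise. -/
def renyiEntropy {X : Type*} [MeasurableSpace X] (N' : ℝ) (μ ν : Measure X) : ℝ≥0∞ :=
  if ν ≪ μ then ∫⁻ x, (ν.rnDeriv μ x) ^ (1 - 1 / N') ∂μ else ∞

/-- Weak convergence of a sequence of measures: convergence of integrals of all bounded
continuous functions. -/
def WeakConv {X : Type*} [TopologicalSpace X] [MeasurableSpace X]
    (μs : ℕ → Measure X) (μ : Measure X) : Prop :=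
  ∀ f : BoundedContinuousFunction X ℝ,
    Tendsto (fun n => ∫ x, f x ∂(μs n)) atTop (𝓝 (∫ x, f x ∂μ))

/-- Tightness of a sequence of measures. -/
def IsTightSeq {X : Type*} [TopologicalSpace X] [MeasurableSpace X]
    (μs : ℕ → Measure X) : Prop :=
  ∀ ε : ℝ, 0 < ε → ∃ K : Set X, IsCompact K ∧ ∀ n, μs n Kᶜ < ENNReal.ofReal ε

/-- The function `s_κ`, with the convention `s_κ(0) = 1`. -/
def sKappa (κ θ : ℝ) : ℝ :=
  if θ = 0 then 1
  else if 0 < κ then Real.sin (Real.sqrt κ * θ) / (Real.sqrt κ * θ)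
  else if κ < 0 then Real.sinh (Real.sqrt (-κ) * θ) / (Real.sqrt (-κ) * θ)
  else 1

/-- `ω_κ = π/√κ` for `κ > 0` and `∞` otherwise. -/
def omegaKappa (κ : ℝ) : ℝ≥0∞ :=
  if 0 < κ then ENNReal.ofReal (Real.pi / Real.sqrt κ) else ∞

/-- The coefficient `τ_{K,N}^{(t)}(θ)`, valued in `[0,∞]`. -/
def tauCoeff (K N t θ : ℝ) : ℝ≥0∞ :=
  if ENNReal.ofReal θ < omegaKappa (K / (N - 1)) then
    ENNReal.ofReal (t * (sKappa (K / (N - 1)) (t * θ) / sKappa (K / (N - 1)) θ) ^ (1 - 1 / N))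
  else ∞

/-- The coefficient `σ_κ^{(t)}(θ)`, valued in `[0,∞]`. -/
def sigmaCoeff (κ t θ : ℝ) : ℝ≥0∞ :=
  if ENNReal.ofReal θ < omegaKappa κ then
    ENNReal.ofReal (t * sKappa κ (t * θ) / sKappa κ θ)
  else ∞

/-- The curvature-dimension condition `CD(K,N)` for `N < 0`, for a (probability) measure on a
metric space. -/
def IsCDSpace {X : Type*} [MetricSpace X] [MeasurableSpace X] (K N : ℝ) (μX : Measure X) : Prop :=
  ∀ ν₀ ν₁ : Measure X, IsProbabilityMeasure ν₀ → IsProbabilityMeasure ν₁ →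
    ν₀ ≪ μX → ν₁ ≪ μX →
    HasFiniteSecondMoment ν₀ → HasFiniteSecondMoment ν₁ →
    renyiEntropy N μX ν₀ < ∞ → renyiEntropy N μX ν₁ < ∞ →
    ∃ (νt : ℝ → Measure X) (π : Measure (X × X)),
      νt 0 = ν₀ ∧ νt 1 = ν₁ ∧
      (∀ s ∈ Icc (0:ℝ) 1, ∀ t ∈ Icc (0:ℝ) 1,
        W2 (νt s) (νt t) = ENNReal.ofReal |s - t| * W2 ν₀ ν₁) ∧
      IsOptimalCoupling π ν₀ ν₁ ∧
      (∀ t ∈ Icc (0:ℝ) 1, ∀ N' ∈ Ico N (0:ℝ),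
        renyiEntropy N' μX ν₀ < ∞ → renyiEntropy N' μX ν₁ < ∞ →
        renyiEntropy N' μX (νt t) ≤
          (∫⁻ p, tauCoeff K N' (1 - t) (dist p.1 p.2) * (ν₀.rnDeriv μX p.1) ^ (-(1 / N')) ∂π)
          + ∫⁻ p, tauCoeff K N' t (dist p.1 p.2) * (ν₁.rnDeriv μX p.2) ^ (-(1 / N')) ∂π)

/-- The reduced curvature-dimension condition `CD*(K,N)` for `N < 0`. -/
def IsCDStarSpace {X : Type*} [MetricSpace X] [MeasurableSpace X] (K N : ℝ)
    (μX : Measure X) : Prop :=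
  ∀ ν₀ ν₁ : Measure X, IsProbabilityMeasure ν₀ → IsProbabilityMeasure ν₁ →
    ν₀ ≪ μX → ν₁ ≪ μX →
    HasFiniteSecondMoment ν₀ → HasFiniteSecondMoment ν₁ →
    renyiEntropy N μX ν₀ < ∞ → renyiEntropy N μX ν₁ < ∞ →
    ∃ (νt : ℝ → Measure X) (π : Measure (X × X)),
      νt 0 = ν₀ ∧ νt 1 = ν₁ ∧
      (∀ s ∈ Icc (0:ℝ) 1, ∀ t ∈ Icc (0:ℝ) 1,
        W2 (νt s) (νt t) = ENNReal.ofReal |s - t| * W2 ν₀ ν₁) ∧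
      IsOptimalCoupling π ν₀ ν₁ ∧
      (∀ t ∈ Icc (0:ℝ) 1, ∀ N' ∈ Ico N (0:ℝ),
        renyiEntropy N' μX ν₀ < ∞ → renyiEntropy N' μX ν₁ < ∞ →
        renyiEntropy N' μX (νt t) ≤
          (∫⁻ p, sigmaCoeff (K / N') (1 - t) (dist p.1 p.2)
              * (ν₀.rnDeriv μX p.1) ^ (-(1 / N')) ∂π)
          + ∫⁻ p, sigmaCoeff (K / N') t (dist p.1 p.2)
              * (ν₁.rnDeriv μX p.2) ^ (-(1 / N')) ∂π)

/-- The conditioned (normalized restricted) measure `ν_B`. -/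
def condProb {X : Type*} [MeasurableSpace X] (ν : Measure X) (B : Set X) : Measure X :=
  (ν B)⁻¹ • ν.restrict B

/-- Inverse hyperbolic cosine, `arcosh x = log (x + √(x²-1))`. -/
def acosh (x : ℝ) : ℝ := Real.log (x + Real.sqrt (x ^ 2 - 1))

/-- A parameter of an mm-space: a Borel map `[0,1) → X` pushing the Lebesgue measure to `μ`. -/
def IsParameter (A : MMSpace) (φ : ℝ → A.X) : Prop :=
  Measurable φ ∧ Measure.map φ (volume.restrict (Ico (0:ℝ) 1)) = A.μ

/-- The Ky Fan distance between two measurable functions on `[0,1)`. -/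
def kyFan (f g : ℝ → ℝ) : ℝ :=
  sInf {ε : ℝ | 0 ≤ ε ∧
    (volume.restrict (Ico (0:ℝ) 1)) {x | ε < |f x - g x|} ≤ ENNReal.ofReal ε}

/-- The pullback of the 1-Lipschitz functions on an mm-space by a parameter. -/
def pullLip (A : MMSpace) (φ : ℝ → A.X) : Set (ℝ → ℝ) :=
  {h | ∃ f : A.X → ℝ, LipschitzWith 1 f ∧ h = f ∘ φ}

/-- The Hausdorff distance between two sets of functions with respect to the Ky Fan metric. -/
def hausdorffKF (A B : Set (ℝ → ℝ)) : ℝ :=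
  max (⨆ f ∈ A, ⨅ g ∈ B, kyFan f g) (⨆ g ∈ B, ⨅ f ∈ A, kyFan f g)

/-- The observable distance between two mm-spaces. -/
def dconc (A B : MMSpace) : ℝ :=
  sInf {r : ℝ | ∃ φ ψ, IsParameter A φ ∧ IsParameter B ψ ∧
    r = hausdorffKF (pullLip A φ) (pullLip B ψ)}

end

noncomputable section

/-- The smooth approximation `F_a(x) = a⁻¹ log(e^{ax} + e^{-ax})` of `|x|`. -/
def Fa (a x : ℝ) : ℝ := a⁻¹ * Real.log (Real.exp (a * x) + Real.exp (-(a * x)))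

/-- A (minimizing, constant-speed) geodesic parametrized by `[0,1]`. -/
def IsGeodOn01 {X : Type*} [PseudoMetricSpace X] (γ : ℝ → X) : Prop :=
  ∀ s ∈ Set.Icc (0:ℝ) 1, ∀ s' ∈ Set.Icc (0:ℝ) 1,
    dist (γ s) (γ s') = |s - s'| * dist (γ 0) (γ 1)

end

open MeasureTheory Filter Set Topology BoundedContinuousFunction in
private lemma aux_int {X Y : Type*} [MetricSpace X] [MeasurableSpace X] [BorelSpace X]
    [TopologicalSpace Y] [MeasurableSpace Y] [OpensMeasurableSpace Y]
    (φ : BoundedContinuousFunction Y ℝ)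
    (proj : C(Y, X)) (hprojm : Measurable proj)
    (μ : Measure Y) [IsFiniteMeasure μ] (νμ : Measure X)
    (hmap : μ.map proj = νμ)
    (f : X → ℝ) (hfm : AEStronglyMeasurable f νμ) (hfi : Integrable f νμ) :
    Integrable (fun p => φ p * f (proj p)) μ := by
  have h1 : Integrable (fun p => f (proj p)) μ := by
    rw [← hmap] at hfi hfm
    exact (integrable_map_measure hfm hprojm.aemeasurable).1 hfi
  exact h1.bdd_mul (φ.continuous.measurable.aestronglyMeasurable) (c := ‖φ‖) (Eventually.of_forall fun x => φ.norm_coe_le_norm x)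

open MeasureTheory Filter Set Topology BoundedContinuousFunction in
private lemma aux_est {X Y : Type*} [MetricSpace X] [MeasurableSpace X] [BorelSpace X]
    [TopologicalSpace Y] [MeasurableSpace Y] [OpensMeasurableSpace Y]
    (φ : BoundedContinuousFunction Y ℝ)
    (proj : C(Y, X)) (hprojm : Measurable proj)
    (μ : Measure Y) [IsFiniteMeasure μ] (νμ : Measure X)
    (hmap : μ.map proj = νμ)
    (f g : X → ℝ) (hfm : Measurable f) (hgm : Measurable g)
    (hfi : Integrable f νμ) (hgi : Integrable g νμ) :
    |(∫ p, φ p * f (proj p) ∂μ) - ∫ p, φ p * g (proj p) ∂μ| ≤ ‖φ‖ * ∫ x, |f x - g x| ∂νμ := by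
  have hI1 := aux_int φ proj hprojm μ νμ hmap f hfm.aestronglyMeasurable hfi
  have hI2 := aux_int φ proj hprojm μ νμ hmap g hgm.aestronglyMeasurable hgi
  have hdiff : Integrable (fun p => |f (proj p) - g (proj p)|) μ := by
    have : Integrable (fun x => |f x - g x|) νμ := (hfi.sub hgi).abs
    rw [← hmap] at this
    exact (integrable_map_measure ((hfm.sub hgm).abs.aestronglyMeasurable)
      hprojm.aemeasurable).1 this
  have key : (∫ p, φ p * f (proj p) ∂μ) - ∫ p, φ p * g (proj p) ∂μ
      = ∫ p, φ p * (f (proj p) - g (proj p)) ∂μ := by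
    rw [← integral_sub hI1 hI2]
    congr 1; ext p; ring
  rw [key]
  have h1 : |∫ p, φ p * (f (proj p) - g (proj p)) ∂μ|
      ≤ ∫ p, |φ p * (f (proj p) - g (proj p))| ∂μ := by
    have := norm_integral_le_integral_norm (μ := μ)
      (fun p => φ p * (f (proj p) - g (proj p)))
    simp only [Real.norm_eq_abs] at this
    exact this
  refine h1.trans ?_
  have hInt3 : Integrable (fun p => |φ p * (f (proj p) - g (proj p))|) μ := by
    refine (hI1.sub hI2).abs.congr (Eventually.of_forall fun p => ?_)
    simp only [Pi.sub_apply]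
    ring_nf
  have h2 : ∫ p, |φ p * (f (proj p) - g (proj p))| ∂μ
      ≤ ∫ p, ‖φ‖ * |f (proj p) - g (proj p)| ∂μ := by
    refine integral_mono hInt3 (hdiff.const_mul _) fun p => ?_
    simp only
    rw [abs_mul]
    exact mul_le_mul_of_nonneg_right ((Real.norm_eq_abs (φ p)) ▸ φ.norm_coe_le_norm p)
      (abs_nonneg _)
  refine h2.trans (le_of_eq ?_)
  rw [integral_const_mul]
  congr 1
  rw [← hmap, integral_map (f := fun x => |f x - g x|) hprojm.aemeasurable ((hfm.sub hgm).abs.aestronglyMeasurable)]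

open MeasureTheory Filter Set Topology BoundedContinuousFunction in
private lemma aux_limsup {X Y : Type*} [MetricSpace X] [MeasurableSpace X] [BorelSpace X]
    [TopologicalSpace Y] [MeasurableSpace Y] [OpensMeasurableSpace Y]
    (πs : ℕ → Measure Y) (π : Measure Y)
    (hps : ∀ n, IsProbabilityMeasure (πs n)) [IsProbabilityMeasure π]
    (hπw : WeakConv πs π) (φ : BoundedContinuousFunction Y ℝ)
    (proj : C(Y, X)) (hprojm : Measurable proj)
    (ν : Measure X) [IsProbabilityMeasure ν] (νs : ℕ → Measure X)
    (hmaps : ∀ n, (πs n).map proj = νs n) (hmapπ : π.map proj = ν)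
    (f : X → ℝ) (hfm : Measurable f) (hf : Integrable f ν)
    (C : ℝ) (hC : 0 < C) (hdom : ∀ n, νs n ≤ ENNReal.ofReal C • ν) :
    limsup (fun n => ∫ p, φ p * f (proj p) ∂(πs n)) atTop ≤ ∫ p, φ p * f (proj p) ∂π := by
  set a : ℕ → ℝ := fun n => ∫ p, φ p * f (proj p) ∂(πs n) with ha
  set T : ℝ := ∫ p, φ p * f (proj p) ∂π with hT
  have main : ∀ ε : ℝ, 0 < ε → limsup a atTop ≤ T + (‖φ‖ * C + ‖φ‖) * ε := by
    intro ε hε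
    obtain ⟨g, hgε, hgi⟩ := hf.exists_boundedContinuous_integral_sub_le hε
    have hfsub : Integrable (fun x => ‖f x - g x‖) ν := (hf.sub hgi).norm
    -- f integrable w.r.t. each νs n
    have hfn : ∀ n, Integrable f (νs n) :=
      fun n => ((hf.smul_measure ENNReal.ofReal_ne_top).mono_measure (hdom n))
    have hgn : ∀ n, Integrable (g : X → ℝ) (νs n) :=
      fun n => ((hgi.smul_measure ENNReal.ofReal_ne_top).mono_measure (hdom n))
    -- the approximation error for νs n
    have herr : ∀ n, ∫ x, |f x - g x| ∂(νs n) ≤ C * ε := by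
      intro n
      have h1 : ∫ x, |f x - g x| ∂(νs n) ≤ ∫ x, |f x - g x| ∂(ENNReal.ofReal C • ν) := by
        refine integral_mono_measure (hdom n) (Eventually.of_forall fun x => abs_nonneg _) ?_
        simpa [Real.norm_eq_abs] using hfsub.smul_measure (c := ENNReal.ofReal C) ENNReal.ofReal_ne_top
      refine h1.trans ?_
      rw [integral_smul_measure, ENNReal.toReal_ofReal hC.le, smul_eq_mul]
      have : ∫ x, |f x - g x| ∂ν ≤ ε := by simpa [Real.norm_eq_abs] using hgε
      exact mul_le_mul_of_nonneg_left this hC.le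
    have hgm : Measurable (g : X → ℝ) := g.continuous.measurable
    set b : ℕ → ℝ := fun n => ∫ p, φ p * g (proj p) ∂(πs n) with hb
    -- |a n - b n| ≤ ‖φ‖ * C * ε
    have hab : ∀ n, |a n - b n| ≤ ‖φ‖ * (C * ε) := by
      intro n
      have := hps n
      refine (aux_est φ proj hprojm (πs n) (νs n) (hmaps n) f g hfm hgm (hfn n) (hgn n)).trans ?_
      exact mul_le_mul_of_nonneg_left (herr n) (norm_nonneg _)
    -- b converges
    set ψ : BoundedContinuousFunction Y ℝ := φ * g.compContinuous proj with hψ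
    have hψeq : ∀ (μ : Measure Y), ∫ p, ψ p ∂μ = ∫ p, φ p * g (proj p) ∂μ := by
      intro μ; rfl
    have hbt : Tendsto b atTop (𝓝 (∫ p, φ p * g (proj p) ∂π)) := by
      have := hπw ψ
      simpa [hψeq] using this
    -- limsup a ≤ lim b + ‖φ‖ C ε
    have hup : ∀ᶠ n in atTop, a n ≤ b n + ‖φ‖ * (C * ε) :=
      Eventually.of_forall fun n => by
        have := hab n; have := abs_le.1 (hab n); linarith [this.2]
    have hdn : ∀ᶠ n in atTop, b n - ‖φ‖ * (C * ε) ≤ a n :=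
      Eventually.of_forall fun n => by
        have := abs_le.1 (hab n); linarith [this.1]
    have hbt' : Tendsto (fun n => b n + ‖φ‖ * (C * ε)) atTop
        (𝓝 ((∫ p, φ p * g (proj p) ∂π) + ‖φ‖ * (C * ε))) := hbt.add_const _
    have hbt'' : Tendsto (fun n => b n - ‖φ‖ * (C * ε)) atTop
        (𝓝 ((∫ p, φ p * g (proj p) ∂π) - ‖φ‖ * (C * ε))) := hbt.sub_const _
    have hco : IsCoboundedUnder (· ≤ ·) atTop a :=
      (hbt''.isBoundedUnder_ge.mono_ge hdn).isCoboundedUnder_le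
    have h1 : limsup a atTop ≤ (∫ p, φ p * g (proj p) ∂π) + ‖φ‖ * (C * ε) := by
      calc limsup a atTop ≤ limsup (fun n => b n + ‖φ‖ * (C * ε)) atTop :=
            limsup_le_limsup hup hco hbt'.isBoundedUnder_le
        _ = _ := hbt'.limsup_eq
    -- compare ∫ φ g dπ with T
    have h2 : (∫ p, φ p * g (proj p) ∂π) ≤ T + ‖φ‖ * ε := by
      have := aux_est φ proj hprojm π ν hmapπ f g hfm hgm hf hgi
      have habs := abs_le.1 this
      have hεg : ∫ x, |f x - g x| ∂ν ≤ ε := by simpa [Real.norm_eq_abs] using hgε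
      nlinarith [habs.1, norm_nonneg φ, mul_le_mul_of_nonneg_left hεg (norm_nonneg φ)]
    calc limsup a atTop ≤ (∫ p, φ p * g (proj p) ∂π) + ‖φ‖ * (C * ε) := h1
      _ ≤ T + ‖φ‖ * ε + ‖φ‖ * (C * ε) := by linarith
      _ = T + (‖φ‖ * C + ‖φ‖) * ε := by ring
  refine le_of_forall_pos_le_add fun ε hε => ?_
  have hM : 0 ≤ ‖φ‖ * C + ‖φ‖ := by positivity
  have := main (ε / (‖φ‖ * C + ‖φ‖ + 1)) (by positivity)
  refine this.trans ?_
  have : (‖φ‖ * C + ‖φ‖) * (ε / (‖φ‖ * C + ‖φ‖ + 1)) ≤ ε := by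
    rw [div_eq_mul_inv, ← mul_assoc]
    rw [mul_comm (‖φ‖ * C + ‖φ‖) ε, mul_assoc]
    nth_rewrite 2 [← mul_one ε]
    gcongr
    rw [mul_inv_le_iff₀ (by positivity), one_mul]
    linarith
  linarith


open MeasureTheory Filter Set in
/-- Upper semicontinuity of integrals `∫ φ(x₀,x₁) fᵢ(xᵢ) dπⁿ` along weakly
convergent couplings, under the domination condition `νᵢⁿ ≤ C·νᵢ`. -/
theorem integral_limsup_of_dominated {X : Type*} [MetricSpace X] [CompleteSpace X]
    [TopologicalSpace.SeparableSpace X] [MeasurableSpace X] [BorelSpace X]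
    (ν0s ν1s : ℕ → Measure X) (ν0 ν1 : Measure X)
    (hp0 : ∀ n, IsProbabilityMeasure (ν0s n)) (hp1 : ∀ n, IsProbabilityMeasure (ν1s n))
    [IsProbabilityMeasure ν0] [IsProbabilityMeasure ν1]
    (hw0 : WeakConv ν0s ν0) (hw1 : WeakConv ν1s ν1)
    (πs : ℕ → Measure (X × X)) (π : Measure (X × X))
    (hπs : ∀ n, IsCoupling (πs n) (ν0s n) (ν1s n)) (hπ : IsCoupling π ν0 ν1)
    (hπw : WeakConv πs π)
    (φ : BoundedContinuousFunction (X × X) ℝ)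
    (f0 f1 : X → ℝ) (hf0m : Measurable f0) (hf1m : Measurable f1)
    (hf0 : Integrable f0 ν0) (hf1 : Integrable f1 ν1)
    (C : ℝ) (hC : 0 < C)
    (hdom0 : ∀ n, ν0s n ≤ ENNReal.ofReal C • ν0)
    (hdom1 : ∀ n, ν1s n ≤ ENNReal.ofReal C • ν1) :
    (limsup (fun n => ∫ p, φ p * f0 p.1 ∂(πs n)) atTop ≤ ∫ p, φ p * f0 p.1 ∂π) ∧
    (limsup (fun n => ∫ p, φ p * f1 p.2 ∂(πs n)) atTop ≤ ∫ p, φ p * f1 p.2 ∂π) := by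
  have hprobπ : IsProbabilityMeasure π := by
    constructor
    have h1 : π.map Prod.fst Set.univ = π Set.univ := by
      rw [Measure.map_apply measurable_fst MeasurableSet.univ, Set.preimage_univ]
    rw [← h1, hπ.1]
    exact measure_univ
  have hprobπs : ∀ n, IsProbabilityMeasure (πs n) := by
    intro n
    constructor
    have h1 : (πs n).map Prod.fst Set.univ = πs n Set.univ := by
      rw [Measure.map_apply measurable_fst MeasurableSet.univ, Set.preimage_univ]
    rw [← h1, (hπs n).1]
    exact (hp0 n).measure_univ
  constructor
  · exact aux_limsup πs π hprobπs hπw φ ⟨Prod.fst, continuous_fst⟩ measurable_fst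
      ν0 ν0s (fun n => (hπs n).1) hπ.1 f0 hf0m hf0 C hC hdom0
  · exact aux_limsup πs π hprobπs hπw φ ⟨Prod.snd, continuous_snd⟩ measurable_snd
      ν1 ν1s (fun n => (hπs n).2) hπ.2 f1 hf1m hf1 C hC hdom1
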